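/- For a finite Coxeter group W and J ⊆ S, the descent class Y_J = {w ∈ W : D(w) = S \ J} equals the interval {w ∈ W : w_{S\J} ≤ w ≤ w_J w_0} in the weak Bruhat (prefix) order, i.e. Y_J is the set of x ∈ X_J having w_{S\J} as a prefix. -/

import Mathlib

/-- The left descent set of `w`. -/
def CoxD {B W : Type*} [Group W] {M : CoxeterMatrix B} (cs : CoxeterSystem M W)
    (w : W) : Set B :=
  {s | cs.length (cs.simple s * w) < cs.length w}

/-- The set `X_J = {x : D(x) ∩ J = ∅}`. -/
def CoxX {B W : Type*} [Group W] {M : CoxeterMatrix B} (cs : CoxeterSystem M W)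
    (J : Set B) : Set W :=
  {x | CoxD cs x ∩ J = ∅}

/-- The standard parabolic subgroup `W_J`. -/
def CoxParabolic {B W : Type*} [Group W] {M : CoxeterMatrix B} (cs : CoxeterSystem M W)
    (J : Set B) : Subgroup W :=
  Subgroup.closure (cs.simple '' J)

/-- `u` is a prefix of `w`: `ℓ(u⁻¹w) = ℓ(w) - ℓ(u)`. -/
def CoxIsPrefix {B W : Type*} [Group W] {M : CoxeterMatrix B} (cs : CoxeterSystem M W)
    (u w : W) : Prop :=
  cs.length u + cs.length (u⁻¹ * w) = cs.length w


namespace StmtAux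
open CoxeterSystem List
open scoped Classical

variable {B W : Type*} [Group W] {M : CoxeterMatrix B} (cs : CoxeterSystem M W)

/-- sign of `t` relative to a list `l` -/
noncomputable def sgn (t : W) (l : List W) : ℤˣ :=
  (l.map (fun r => if t = r then (-1 : ℤˣ) else 1)).prod

@[simp] lemma sgn_nil (t : W) : sgn t ([] : List W) = 1 := rfl

lemma sgn_cons (t r : W) (l : List W) :
    sgn t (r :: l) = (if t = r then (-1:ℤˣ) else 1) * sgn t l := by
  simp [sgn]

lemma sgn_eq_one_of_not_mem {t : W} {l : List W} (h : t ∉ l) : sgn t l = 1 := by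
  induction l with
  | nil => rfl
  | cons a l ih =>
    simp only [List.mem_cons, not_or] at h
    rw [sgn_cons, if_neg h.1, one_mul]
    exact ih h.2

lemma mem_of_sgn_ne_one {t : W} {l : List W} (h : sgn t l ≠ 1) : t ∈ l := by
  by_contra hc; exact h (sgn_eq_one_of_not_mem hc)

lemma sgn_eq_neg_one_of_nodup_mem {t : W} {l : List W} (hn : l.Nodup) (hm : t ∈ l) :
    sgn t l = -1 := by
  induction l with
  | nil => simp at hm
  | cons a l ih =>
    rw [sgn_cons]
    rcases List.mem_cons.mp hm with rfl | hm'
    · rw [if_pos rfl, sgn_eq_one_of_not_mem (List.nodup_cons.mp hn).1, mul_one]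
    · have hta : t ≠ a := by rintro rfl; exact (List.nodup_cons.mp hn).1 hm'
      rw [if_neg hta, one_mul]
      exact ih (List.nodup_cons.mp hn).2 hm'

/-- The map underlying the reflection representation sign permutation. -/
noncomputable def tf (i : B) : W × ℤˣ → W × ℤˣ :=
  fun p => (cs.simple i * p.1 * cs.simple i, if p.1 = cs.simple i then -p.2 else p.2)

lemma tf_invol (i : B) : Function.Involutive (tf cs i) := by
  rintro ⟨t, ε⟩
  have h1 : cs.simple i * (cs.simple i * t * cs.simple i) * cs.simple i = t := by
    rw [← mul_assoc, ← mul_assoc, cs.simple_mul_simple_self, one_mul, mul_assoc,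
      cs.simple_mul_simple_self, mul_one]
  by_cases h : t = cs.simple i
  · subst h
    have hcond : cs.simple i * cs.simple i * cs.simple i = cs.simple i := by
      rw [cs.simple_mul_simple_self, one_mul]
    simp [tf, hcond]
  · have h2 : cs.simple i * t * cs.simple i ≠ cs.simple i := by
      intro hc
      apply h
      have h3 : t = (cs.simple i)⁻¹ * (cs.simple i * t * cs.simple i) * (cs.simple i)⁻¹ := by
        group
      rw [hc, cs.inv_simple] at h3
      rw [h3, cs.simple_mul_simple_self, one_mul]
    simp only [tf, if_neg h, if_neg h2, h1]

/-- The permutation of `W × ℤˣ` associated to a simple reflection. -/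
noncomputable def tperm (i : B) : Equiv.Perm (W × ℤˣ) := (tf_invol cs i).toPerm

lemma tperm_apply (i : B) (t : W) (ε : ℤˣ) :
    tperm cs i (t, ε) = (cs.simple i * t * cs.simple i,
      if t = cs.simple i then -ε else ε) := rfl

lemma conj_eq_iff (a b t : W) : a * t * a⁻¹ = b ↔ t = a⁻¹ * b * a := by
  constructor
  · intro h; rw [← h]; group
  · intro h; rw [h]; group

lemma simple_mul_pow (i j : B) (k : ℕ) :
    cs.simple j * (cs.simple i * cs.simple j) ^ k
      = (cs.simple j * cs.simple i) ^ k * cs.simple j := by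
  induction k with
  | zero => simp
  | succ k ih =>
    have h1 : cs.simple j * (cs.simple i * cs.simple j)
        = (cs.simple j * cs.simple i) * cs.simple j := by group
    rw [pow_succ', ← mul_assoc, h1, mul_assoc, ih, pow_succ']
    group

lemma tperm_mul_pow (i j : B) (k : ℕ) (t : W) (ε : ℤˣ) :
    ((tperm cs i * tperm cs j) ^ k) (t, ε) =
      ((cs.simple i * cs.simple j) ^ k * t * ((cs.simple i * cs.simple j) ^ k)⁻¹,
        ε * ∏ c ∈ Finset.range (2 * k),
          (if t = (cs.simple j * cs.simple i) ^ c * cs.simple j then (-1 : ℤˣ) else 1)) := by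
  induction k with
  | zero => simp
  | succ k ih =>
    have hps : ∀ m : ℕ, ((cs.simple i * cs.simple j) ^ m)⁻¹
        = (cs.simple j * cs.simple i) ^ m := by
      intro m
      rw [← inv_pow, mul_inv_rev, cs.inv_simple, cs.inv_simple]
    rw [pow_succ', Equiv.Perm.mul_apply, ih, Equiv.Perm.mul_apply, tperm_apply, tperm_apply]
    set p := cs.simple i * cs.simple j with hp
    set q := cs.simple j * cs.simple i with hq
    have hsp : ∀ m : ℕ, cs.simple j * p ^ m = q ^ m * cs.simple j := simple_mul_pow cs i j
    have hmid : ∀ u : W, (cs.simple j * u * cs.simple j = cs.simple i)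
        ↔ (u = cs.simple j * cs.simple i * cs.simple j) := by
      intro u
      constructor
      · intro h
        have h3 : u = (cs.simple j)⁻¹ * (cs.simple j * u * cs.simple j) * (cs.simple j)⁻¹ := by
          group
        rw [h, cs.inv_simple] at h3
        exact h3
      · intro h
        rw [h, show cs.simple j * (cs.simple j * cs.simple i * cs.simple j) * cs.simple j
          = (cs.simple j * cs.simple j) * cs.simple i * (cs.simple j * cs.simple j) by group,
          cs.simple_mul_simple_self, one_mul, mul_one]
    have hc1 : (p ^ k * t * (p ^ k)⁻¹ = cs.simple j) ↔ (t = q ^ (2 * k) * cs.simple j) := by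
      rw [conj_eq_iff, hps k]
      suffices h : q ^ k * cs.simple j * p ^ k = q ^ (2 * k) * cs.simple j by rw [h]
      rw [mul_assoc, hsp k, ← mul_assoc, ← pow_add, ← two_mul]
    have hc2 : (cs.simple j * (p ^ k * t * (p ^ k)⁻¹) * cs.simple j = cs.simple i)
        ↔ (t = q ^ (2 * k + 1) * cs.simple j) := by
      rw [hmid, conj_eq_iff, hps k]
      suffices h : q ^ k * (cs.simple j * cs.simple i * cs.simple j) * p ^ k
          = q ^ (2 * k + 1) * cs.simple j by rw [h]
      have e1 : cs.simple j * cs.simple i * cs.simple j = q * cs.simple j := by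
        rw [hq]
      rw [e1, ← mul_assoc, ← pow_succ, mul_assoc, hsp k, ← mul_assoc, ← pow_add]
      have : k + 1 + k = 2 * k + 1 := by omega
      rw [this]
    have hfirst : cs.simple i * (cs.simple j * (p ^ k * t * (p ^ k)⁻¹) * cs.simple j)
        * cs.simple i = p ^ (k + 1) * t * (p ^ (k + 1))⁻¹ := by
      rw [hps k, hps (k + 1), pow_succ' p, pow_succ q, hp, hq]
      group
    have hprod : (∏ c ∈ Finset.range (2 * (k + 1)),
          (if t = q ^ c * cs.simple j then (-1 : ℤˣ) else 1))
        = (∏ c ∈ Finset.range (2 * k),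
            (if t = q ^ c * cs.simple j then (-1 : ℤˣ) else 1))
          * (if t = q ^ (2 * k) * cs.simple j then (-1 : ℤˣ) else 1)
          * (if t = q ^ (2 * k + 1) * cs.simple j then (-1 : ℤˣ) else 1) := by
      have h2k : 2 * (k + 1) = (2 * k) + 1 + 1 := by ring
      rw [h2k, Finset.prod_range_succ, Finset.prod_range_succ]
    rw [Prod.mk.injEq]
    refine ⟨hfirst, ?_⟩
    rw [hprod]
    simp only [hc1, hc2]
    by_cases h1 : t = q ^ (2 * k) * cs.simple j <;>
      by_cases h2 : t = q ^ (2 * k + 1) * cs.simple j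
    · simp only [if_pos h1, if_pos h2]; simp
    · simp only [if_pos h1, if_neg h2]; simp
    · simp only [if_neg h1, if_pos h2]; simp
    · simp only [if_neg h1, if_neg h2]; simp

lemma isLiftable : M.IsLiftable (tperm cs) := by
  intro i j
  apply Equiv.ext
  rintro ⟨t, ε⟩
  rw [tperm_mul_pow, cs.simple_mul_simple_pow i j]
  have hq : (cs.simple j * cs.simple i) ^ M i j = 1 := cs.simple_mul_simple_pow' i j
  have hprod : (∏ c ∈ Finset.range (2 * M i j),
      (if t = (cs.simple j * cs.simple i) ^ c * cs.simple j then (-1 : ℤˣ) else 1)) = 1 := by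
    rw [two_mul, Finset.prod_range_add]
    have heq : ∀ c : ℕ, ((cs.simple j * cs.simple i) ^ (M i j + c) : W)
        = (cs.simple j * cs.simple i) ^ c := by
      intro c
      rw [pow_add, hq, one_mul]
    have h2 : (∏ c ∈ Finset.range (M i j),
        (if t = (cs.simple j * cs.simple i) ^ (M i j + c) * cs.simple j
          then (-1 : ℤˣ) else 1))
        = ∏ c ∈ Finset.range (M i j),
          (if t = (cs.simple j * cs.simple i) ^ c * cs.simple j then (-1 : ℤˣ) else 1) := by
      apply Finset.prod_congr rfl
      intro c _
      rw [heq c]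
    rw [h2, Int.units_mul_self]
  rw [hprod, mul_one]
  simp

noncomputable def rho : W →* Equiv.Perm (W × ℤˣ) := cs.lift ⟨tperm cs, isLiftable cs⟩

lemma rho_simple (i : B) : rho cs (cs.simple i) = tperm cs i :=
  cs.lift_apply_simple (isLiftable cs) i

lemma ris_cons (i : B) (ω : List B) :
    cs.rightInvSeq (i :: ω) = ((cs.wordProd ω)⁻¹ * cs.simple i * cs.wordProd ω)
      :: cs.rightInvSeq ω := rfl

lemma rho_wordProd (ω : List B) (t : W) (ε : ℤˣ) :
    rho cs (cs.wordProd ω) (t, ε)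
      = (cs.wordProd ω * t * (cs.wordProd ω)⁻¹, ε * sgn t (cs.rightInvSeq ω)) := by
  induction ω with
  | nil => simp [sgn]
  | cons i ω ih =>
    rw [cs.wordProd_cons, map_mul, Equiv.Perm.mul_apply, ih, rho_simple, tperm_apply,
      ris_cons, sgn_cons]
    rw [Prod.mk.injEq]
    constructor
    · rw [mul_inv_rev, cs.inv_simple]
      group
    · simp only [conj_eq_iff]
      by_cases hcond : t = (cs.wordProd ω)⁻¹ * cs.simple i * cs.wordProd ω
      · rw [if_pos hcond, if_pos hcond]; simp
      · rw [if_neg hcond, if_neg hcond]; simp [mul_comm]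

lemma mem_ris_of_sign_neg {w t : W} {ω : List B} (hw : cs.wordProd ω = w)
    (h : (rho cs w (t, 1)).2 = -1) : t ∈ cs.rightInvSeq ω := by
  subst hw
  rw [rho_wordProd] at h
  simp only [one_mul] at h
  exact mem_of_sgn_ne_one (by rw [h]; decide)

lemma reduced_of_nodup {ω : List B} (hn : (cs.rightInvSeq ω).Nodup) : cs.IsReduced ω := by
  classical
  obtain ⟨ω', hlen, hw⟩ := cs.exists_reduced_word (cs.wordProd ω)
  replace hlen : ω'.length = cs.length (cs.wordProd ω) := by rw [hw]; exact hlen.symm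
  have hsub : ∀ t ∈ cs.rightInvSeq ω, t ∈ cs.rightInvSeq ω' := by
    intro t ht
    apply mem_ris_of_sign_neg cs (w := cs.wordProd ω) hw.symm
    rw [rho_wordProd]
    simp only [one_mul]
    exact sgn_eq_neg_one_of_nodup_mem hn ht
  have h1 : (cs.rightInvSeq ω).toFinset.card = ω.length := by
    rw [List.toFinset_card_of_nodup hn, cs.length_rightInvSeq]
  have h2 : (cs.rightInvSeq ω').toFinset.card ≤ ω'.length := by
    refine le_trans (List.toFinset_card_le _) ?_
    rw [cs.length_rightInvSeq]
  have h3 : (cs.rightInvSeq ω).toFinset ⊆ (cs.rightInvSeq ω').toFinset := by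
    intro u hu
    rw [List.mem_toFinset] at *
    exact hsub u hu
  have h4 := Finset.card_le_card h3
  have h5 := cs.length_wordProd_le ω
  rw [CoxeterSystem.IsReduced]
  omega

lemma delete_two {ω : List B} (hn : ¬ (cs.rightInvSeq ω).Nodup) :
    ∃ ω' : List B, ω' <+ ω ∧ ω'.length + 2 = ω.length ∧ cs.wordProd ω' = cs.wordProd ω := by
  classical
  rw [List.nodup_iff_getElem?_ne_getElem?] at hn
  push_neg at hn
  obtain ⟨j, j', j_lt_j', j'_lt_length, dup⟩ := hn
  replace j'_lt_length : j' < List.length ω := by simpa using j'_lt_length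
  rw [getElem?_eq_getElem (by simp; omega), getElem?_eq_getElem (by simp; omega)] at dup
  apply Option.some_injective at dup
  rw [← getD_eq_getElem _ 1, ← getD_eq_getElem _ 1] at dup
  set! t := (cs.rightInvSeq ω).getD j 1 with h₁
  set! t' := (cs.rightInvSeq (ω.eraseIdx j)).getD (j' - 1) 1 with h₂
  have h₃ : t' = (cs.rightInvSeq ω).getD j' 1 := by
    rw [h₂, cs.getD_rightInvSeq, cs.getD_rightInvSeq,
      (Nat.sub_add_cancel (by omega) : j' - 1 + 1 = j'), eraseIdx_eq_take_drop_succ,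
      drop_append, drop_of_length_le (by simp [j_lt_j'.le]), length_take,
      drop_drop, nil_append, min_eq_left_of_lt (j_lt_j'.trans j'_lt_length), Nat.add_comm,
      ← add_assoc, Nat.sub_add_cancel (by omega), mul_left_inj, mul_right_inj]
    congr 2
    show (take j ω ++ drop (j + 1) ω)[j' - 1]? = ω[j']?
    rw [getElem?_append_right (by simp [Nat.le_sub_one_of_lt j_lt_j']), getElem?_drop]
    congr
    show j + 1 + (j' - 1 - List.length (take j ω)) = j'
    rw [length_take]
    omega
  have h₄ : t * t' = 1 := by
    rw [h₁, h₃, dup]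
    exact cs.getD_rightInvSeq_mul_self _ _
  have h₅ := calc
    cs.wordProd ω = cs.wordProd ω * t * t' := by rw [mul_assoc, h₄]; group
    _ = (cs.wordProd (ω.eraseIdx j)) * t' :=
        congrArg (· * t') (cs.wordProd_mul_getD_rightInvSeq _ _)
    _ = cs.wordProd ((ω.eraseIdx j).eraseIdx (j' - 1)) :=
        cs.wordProd_mul_getD_rightInvSeq _ _
  have hlen1 : (ω.eraseIdx j).length + 1 = ω.length :=
    List.length_eraseIdx_add_one (by omega)
  have hj'1 : j' - 1 < (ω.eraseIdx j).length := by omega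
  have hlen2 : ((ω.eraseIdx j).eraseIdx (j' - 1)).length + 1 = (ω.eraseIdx j).length :=
    List.length_eraseIdx_add_one hj'1
  refine ⟨(ω.eraseIdx j).eraseIdx (j' - 1), ?_, ?_, h₅.symm⟩
  · exact (List.eraseIdx_sublist _ _).trans (List.eraseIdx_sublist _ _)
  · omega

lemma delete_of_not_reduced {ω : List B} (h : ¬ cs.IsReduced ω) :
    ∃ ω', ω' <+ ω ∧ ω'.length + 2 = ω.length ∧ cs.wordProd ω' = cs.wordProd ω :=
  delete_two cs (fun hn => h (reduced_of_nodup cs hn))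

private lemma exists_reduced_sublist_aux : ∀ n : ℕ, ∀ ω : List B, ω.length = n →
    ∃ ω', ω' <+ ω ∧ cs.IsReduced ω' ∧ cs.wordProd ω' = cs.wordProd ω := by
  intro n
  induction n using Nat.strong_induction_on with
  | h n ih =>
    intro ω hn
    by_cases h : cs.IsReduced ω
    · exact ⟨ω, List.Sublist.refl ω, h, rfl⟩
    · obtain ⟨ω₁, hsub, hlen, hw⟩ := delete_of_not_reduced cs h
      obtain ⟨ω', hsub', hred', hw'⟩ := ih ω₁.length (by omega) ω₁ rfl
      exact ⟨ω', hsub'.trans hsub, hred', by rw [hw', hw]⟩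

lemma exists_reduced_sublist (ω : List B) :
    ∃ ω', ω' <+ ω ∧ cs.IsReduced ω' ∧ cs.wordProd ω' = cs.wordProd ω :=
  exists_reduced_sublist_aux cs ω.length ω rfl

lemma exists_word_of_mem_closure {K : Set B} {w : W}
    (hw : w ∈ Subgroup.closure (cs.simple '' K)) :
    ∃ ω : List B, (∀ i ∈ ω, i ∈ K) ∧ cs.wordProd ω = w := by
  induction hw using Subgroup.closure_induction with
  | mem x hx =>
    obtain ⟨i, hi, rfl⟩ := hx
    exact ⟨[i], by simpa using hi, by simp⟩
  | one => exact ⟨[], by simp, by simp⟩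
  | mul x y hx hy ihx ihy =>
    obtain ⟨ω₁, h1, e1⟩ := ihx
    obtain ⟨ω₂, h2, e2⟩ := ihy
    refine ⟨ω₁ ++ ω₂, ?_, by rw [cs.wordProd_append, e1, e2]⟩
    intro i hi
    rcases List.mem_append.mp hi with h | h
    exacts [h1 i h, h2 i h]
  | inv x hx ihx =>
    obtain ⟨ω₁, h1, e1⟩ := ihx
    exact ⟨ω₁.reverse, fun i hi => h1 i (List.mem_reverse.mp hi),
      by rw [cs.wordProd_reverse, e1]⟩

lemma exists_reduced_word_of_mem_closure {K : Set B} {w : W}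
    (hw : w ∈ Subgroup.closure (cs.simple '' K)) :
    ∃ ω : List B, (∀ i ∈ ω, i ∈ K) ∧ cs.IsReduced ω ∧ cs.wordProd ω = w := by
  obtain ⟨ω, hK, hw'⟩ := exists_word_of_mem_closure cs hw
  obtain ⟨ω', hsub, hred, he⟩ := exists_reduced_sublist cs ω
  exact ⟨ω', fun i hi => hK i (hsub.subset hi), hred, by rw [he, hw']⟩

lemma exists_left_descent_of_mem_closure {K : Set B} {w : W}
    (hw : w ∈ Subgroup.closure (cs.simple '' K)) (hne : w ≠ 1) :
    ∃ i ∈ K, cs.length (cs.simple i * w) < cs.length w := by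
  obtain ⟨ω, hK, hred, he⟩ := exists_reduced_word_of_mem_closure cs hw
  cases ω with
  | nil => exact absurd (by rw [← he]; simp) hne
  | cons i ω' =>
    refine ⟨i, hK i List.mem_cons_self, ?_⟩
    have h1 : cs.simple i * w = cs.wordProd ω' := by
      rw [← he, cs.wordProd_cons, ← mul_assoc, cs.simple_mul_simple_self, one_mul]
    rw [h1, ← he]
    calc cs.length (cs.wordProd ω') ≤ ω'.length := cs.length_wordProd_le ω'
    _ < (i :: ω').length := by simp
    _ = cs.length (cs.wordProd (i :: ω')) := hred.symm

lemma exchange {ω : List B} (hr : cs.IsReduced ω) {i : B}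
    (hd : cs.length (cs.simple i * cs.wordProd ω) < cs.length (cs.wordProd ω)) :
    ∃ γ : List B, γ <+ ω ∧ γ.length + 1 = ω.length ∧
      cs.wordProd γ = cs.simple i * cs.wordProd ω := by
  have hlow : cs.length (cs.wordProd ω) = ω.length := hr
  have hnr : ¬ cs.IsReduced (i :: ω) := by
    intro hred
    have h1 : cs.length (cs.wordProd (i :: ω)) = ω.length + 1 := by
      rw [hred]; simp
    rw [cs.wordProd_cons] at h1
    omega
  obtain ⟨ω₂, hsub, hlen, hw⟩ := delete_of_not_reduced cs hnr
  rw [cs.wordProd_cons] at hw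
  simp only [List.length_cons] at hlen
  rcases List.sublist_cons_iff.mp hsub with h | ⟨γ₂, rfl, hsub₂⟩
  · exact ⟨ω₂, h, by omega, hw⟩
  · exfalso
    rw [cs.wordProd_cons] at hw
    have hγ : cs.wordProd γ₂ = cs.wordProd ω := mul_left_cancel hw
    have h1 := cs.length_wordProd_le γ₂
    rw [hγ, hlow] at h1
    simp only [List.length_cons] at hlen
    omega

lemma prefix_of_descents {K : Set B} {x : W}
    (hx : ∀ i ∈ K, cs.length (cs.simple i * x) < cs.length x) :
    ∀ v ∈ Subgroup.closure (cs.simple '' K),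
      cs.length v + cs.length (v⁻¹ * x) = cs.length x := by
  have main : ∀ n : ℕ, ∀ v, v ∈ Subgroup.closure (cs.simple '' K) → cs.length v = n →
      cs.length v + cs.length (v⁻¹ * x) = cs.length x := by
    intro n
    induction n using Nat.strong_induction_on with
    | h n ih =>
      intro v hv hn
      rcases eq_or_ne v 1 with rfl | hne
      · simp
      · obtain ⟨i, hiK, hdesc⟩ := exists_left_descent_of_mem_closure cs hv hne
        have hsv : cs.length (cs.simple i * v) + 1 = cs.length v := by
          rcases cs.length_simple_mul v i with h | h
          · omega
          · omega
        have hv' : cs.simple i * v ∈ Subgroup.closure (cs.simple '' K) :=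
          mul_mem (Subgroup.subset_closure ⟨i, hiK, rfl⟩) hv
        have ih1 : cs.length (cs.simple i * v)
            + cs.length ((cs.simple i * v)⁻¹ * x) = cs.length x :=
          ih (cs.length (cs.simple i * v)) (by omega) _ hv' rfl
        obtain ⟨α, hαlen, hαw⟩ := cs.exists_reduced_word (cs.simple i * v)
        obtain ⟨δ, hδlen, hδw⟩ := cs.exists_reduced_word ((cs.simple i * v)⁻¹ * x)
        replace hαlen : α.length = cs.length (cs.simple i * v) := by rw [hαw]; exact hαlen.symm
        replace hδlen : δ.length = cs.length ((cs.simple i * v)⁻¹ * x) := by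
          rw [hδw]; exact hδlen.symm
        have hconc : cs.wordProd (α ++ δ) = x := by
          rw [cs.wordProd_append, ← hαw, ← hδw, mul_inv_cancel_left]
        have hredc : cs.IsReduced (α ++ δ) := by
          rw [CoxeterSystem.IsReduced, hconc, List.length_append]
          omega
        have hd2 : cs.length (cs.simple i * cs.wordProd (α ++ δ))
            < cs.length (cs.wordProd (α ++ δ)) := by
          rw [hconc]
          exact hx i hiK
        obtain ⟨γ, hγsub, hγlen, hγw⟩ := exchange cs hredc hd2
        rw [hconc] at hγw
        obtain ⟨γ₁, γ₂, rfl, hs1, hs2⟩ := List.sublist_append_iff.mp hγsub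
        have hl1 := hs1.length_le
        have hl2 := hs2.length_le
        rw [List.length_append, List.length_append] at hγlen
        rcases lt_or_ge γ₁.length α.length with hcase | hcase
        · have hγ₂ : γ₂ = δ := hs2.eq_of_length (by omega)
          subst hγ₂
          rw [cs.wordProd_append, ← hδw] at hγw
          have h2 : v * ((cs.simple i * v)⁻¹ * x) = cs.simple i * x := by
            rw [mul_inv_rev, cs.inv_simple]
            group
          have hv'' : cs.wordProd γ₁ = v := mul_right_cancel (hγw.trans h2.symm)
          have h3 := cs.length_wordProd_le γ₁
          rw [hv''] at h3
          omega
        · have hγ₁ : γ₁ = α := hs1.eq_of_length (le_antisymm hl1 hcase)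
          subst hγ₁
          rw [cs.wordProd_append, ← hαw] at hγw
          have h2 : (cs.simple i * v) * (v⁻¹ * x) = cs.simple i * x := by group
          have hγ₂w : cs.wordProd γ₂ = v⁻¹ * x := mul_left_cancel (hγw.trans h2.symm)
          have hle := cs.length_wordProd_le γ₂
          rw [hγ₂w] at hle
          have htri := cs.length_mul_le v (v⁻¹ * x)
          rw [mul_inv_cancel_left] at htri
          omega
  intro v hv
  exact main (cs.length v) v hv rfl

end StmtAux

/-- The descent class `Y_J = {w : D(w) = S \ J}` is the set of `x ∈ X_J`
having the longest element of `W_{S \ J}` as a prefix. -/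
theorem stmt7 {B W : Type*} [Fintype B] [Group W] [Fintype W]
    {M : CoxeterMatrix B} (cs : CoxeterSystem M W) (J : Set B) (wSJ : W)
    (hwSJ : wSJ ∈ CoxParabolic cs Jᶜ ∧
      ∀ u ∈ CoxParabolic cs Jᶜ, cs.length u ≤ cs.length wSJ) :
    {w : W | CoxD cs w = Jᶜ} = {x : W | x ∈ CoxX cs J ∧ CoxIsPrefix cs wSJ x} := by
  have hpar : ∀ u : W, u ∈ CoxParabolic cs Jᶜ ↔ u ∈ Subgroup.closure (cs.simple '' Jᶜ) := by
    intro u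
    rfl
  ext x
  simp only [Set.mem_setOf_eq]
  constructor
  · intro h
    have hdesc : ∀ i ∈ (Jᶜ : Set B), cs.length (cs.simple i * x) < cs.length x := by
      intro i hi
      have hmem : i ∈ CoxD cs x := by rw [h]; exact hi
      exact hmem
    refine ⟨?_, ?_⟩
    · show CoxD cs x ∩ J = ∅
      rw [h]
      rw [Set.compl_inter_self]
    · exact StmtAux.prefix_of_descents cs hdesc wSJ ((hpar wSJ).mp hwSJ.1)
  · rintro ⟨hX, hpre⟩
    have hX' : CoxD cs x ∩ J = ∅ := hX
    have hpre' : cs.length wSJ + cs.length (wSJ⁻¹ * x) = cs.length x := hpre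
    have hwdesc : ∀ i ∈ (Jᶜ : Set B), cs.length (cs.simple i * wSJ) + 1 = cs.length wSJ := by
      intro i hi
      have hmem : cs.simple i * wSJ ∈ CoxParabolic cs Jᶜ := by
        rw [hpar]
        exact mul_mem (Subgroup.subset_closure ⟨i, hi, rfl⟩) ((hpar wSJ).mp hwSJ.1)
      have hle := hwSJ.2 _ hmem
      rcases cs.length_simple_mul wSJ i with hcase | hcase
      · omega
      · omega
    have hsubset : (Jᶜ : Set B) ⊆ CoxD cs x := by
      intro i hi
      show cs.length (cs.simple i * x) < cs.length x
      have h1 : cs.simple i * x = (cs.simple i * wSJ) * (wSJ⁻¹ * x) := by group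
      have h2 := cs.length_mul_le (cs.simple i * wSJ) (wSJ⁻¹ * x)
      rw [← h1] at h2
      have h3 := hwdesc i hi
      omega
    have hsubset2 : CoxD cs x ⊆ (Jᶜ : Set B) := by
      intro i hi
      by_contra hc
      have hiJ : i ∈ J := Set.notMem_compl_iff.mp hc
      have : i ∈ CoxD cs x ∩ J := ⟨hi, hiJ⟩
      rw [hX'] at this
      exact absurd this (Set.notMem_empty i)
    exact Set.Subset.antisymm hsubset2 hsubset
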